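/- Let Ω ⊆ NW(g) be a set satisfying g^{-1}(Ω) = Ω. Then NW(F) ∩ p₁^{-1}(Ω) = S ∩ p₁^{-1}(Ω); in particular, every point of S ∩ p₁^{-1}(Ω) is a non-wandering point of F. -/

import Mathlib

/-- A point `x` is non-wandering for `h` if for every neighborhood `U` of `x`
there is `n ≥ 1` with `h^n(U) ∩ U ≠ ∅`. -/
def NonWandering {X : Type*} [TopologicalSpace X] (h : X → X) (x : X) : Prop :=
  ∀ U ∈ nhds x, ∃ n ≥ 1, (h^[n] '' U ∩ U).Nonempty

/-- Auxiliary: for a continuous self-map of a compact metric space, every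
non-wandering point lies in every iterated forward image of the whole space. -/
theorem nonWandering_mem_iterate_image {X : Type*} [MetricSpace X] [CompactSpace X]
    [Nonempty X] (F : X → X) (hFc : Continuous F) (y : X) (hy : NonWandering F y)
    (l : ℕ) : y ∈ F^[l] '' Set.univ := by
  by_contra hyl
  set K := F^[l] '' Set.univ with hK
  have hKc : IsCompact K := isCompact_univ.image (hFc.iterate l)
  have hKne : K.Nonempty := Set.Nonempty.image _ Set.univ_nonempty
  have hpos : 0 < Metric.infDist y K :=
    (hKc.isClosed.notMem_iff_infDist_pos hKne).1 hyl
  set ε := Metric.infDist y K with hε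
  -- for each j, get a return of time < l within 1/(j+1) of y
  have key : ∀ j : ℕ, ∃ n x, 1 ≤ n ∧ n < l ∧ dist x y < 1 / (j + 1) ∧
      dist (F^[n] x) y < 1 / (j + 1) := by
    intro j
    have hr : (0 : ℝ) < min (ε / 2) (1 / (j + 1)) := by
      apply lt_min (by linarith)
      positivity
    obtain ⟨n, hn, q, ⟨x, hx, rfl⟩, hq2⟩ :=
      hy (Metric.ball y (min (ε / 2) (1 / (j + 1)))) (Metric.ball_mem_nhds _ hr)
    have hnl : n < l := by
      by_contra hnl
      push_neg at hnl
      have hqK : F^[n] x ∈ K := by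
        have : F^[n] x = F^[l] (F^[n - l] x) := by
          rw [← Function.iterate_add_apply, Nat.add_sub_cancel' hnl]
        exact ⟨F^[n - l] x, Set.mem_univ _, this.symm⟩
      have h1 : ε ≤ dist y (F^[n] x) := Metric.infDist_le_dist_of_mem hqK
      have h2 : dist (F^[n] x) y < ε / 2 :=
        lt_of_lt_of_le (Metric.mem_ball.1 hq2) (min_le_left _ _)
      rw [dist_comm] at h1
      linarith
    refine ⟨n, x, hn, hnl, ?_, ?_⟩
    · exact lt_of_lt_of_le (Metric.mem_ball.1 hx) (min_le_right _ _)
    · exact lt_of_lt_of_le (Metric.mem_ball.1 hq2) (min_le_right _ _)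
  choose nseq xseq h1seq h2seq h3seq h4seq using key
  -- pigeonhole: some return time occurs for arbitrarily large j
  have hl : 0 < l := by have := h1seq 0; have := h2seq 0; omega
  have : ∃ b : Fin l, Set.Infinite {j : ℕ | (⟨nseq j, h2seq j⟩ : Fin l) = b} := by
    by_contra hfin
    push_neg at hfin
    have : (Set.univ : Set ℕ).Finite := by
      have : (Set.univ : Set ℕ) = ⋃ b : Fin l, {j : ℕ | (⟨nseq j, h2seq j⟩ : Fin l) = b} := by
        ext j; simp
      rw [this]
      exact Set.finite_iUnion fun b => hfin b
    exact Set.infinite_univ this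
  obtain ⟨b, hb⟩ := this
  set n := (b : ℕ) with hn
  -- F^[n] y = y
  have hfix : F^[n] y = y := by
    rw [← dist_eq_zero]
    by_contra hd
    have hd' : 0 < dist (F^[n] y) y := lt_of_le_of_ne dist_nonneg (Ne.symm hd)
    set η := dist (F^[n] y) y with hη
    obtain ⟨δ, hδ, hcont⟩ := Metric.continuous_iff.1 (hFc.iterate n) y (η / 2) (by linarith)
    obtain ⟨j0, hj0⟩ := exists_nat_one_div_lt (lt_min hδ (by linarith : (0:ℝ) < η/2))
    obtain ⟨j, hj, hjgt⟩ := hb.exists_gt j0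
    have hjval : nseq j = n := by
      have := hj
      simp only [Set.mem_setOf_eq] at this
      exact congrArg Fin.val this
    have hmono : 1 / ((j : ℝ) + 1) ≤ 1 / ((j0 : ℝ) + 1) := by
      apply one_div_le_one_div_of_le (by positivity)
      have : (j0 : ℝ) ≤ j := Nat.cast_le.2 (le_of_lt hjgt)
      linarith
    have hsmall : 1 / ((j : ℝ) + 1) < min δ (η / 2) := lt_of_le_of_lt hmono hj0
    have hx : dist (xseq j) y < δ := by
      have := h3seq j
      have h5 := lt_of_lt_of_le hsmall (min_le_left _ _)
      linarith
    have hFx : dist (F^[n] (xseq j)) (F^[n] y) < η / 2 := hcont _ hx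
    have hFxy : dist (F^[n] (xseq j)) y < η / 2 := by
      have := h4seq j
      rw [hjval] at this
      have h5 := lt_of_lt_of_le hsmall (min_le_right _ _)
      linarith
    have : dist (F^[n] y) y < η := by
      calc dist (F^[n] y) y ≤ dist (F^[n] y) (F^[n] (xseq j)) + dist (F^[n] (xseq j)) y :=
            dist_triangle _ _ _
        _ < η / 2 + η / 2 := by rw [dist_comm (F^[n] y)]; exact add_lt_add hFx hFxy
        _ = η := by ring
    exact absurd this (lt_irrefl η)
  -- y is periodic with period n ≥ 1, so y ∈ K
  have hn1 : 1 ≤ n := by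
    obtain ⟨j, hj, -⟩ := hb.exists_gt 0
    have hjval : nseq j = n := by
      have := hj
      simp only [Set.mem_setOf_eq] at this
      exact congrArg Fin.val this
    rw [← hjval]; exact h1seq j
  have hyK : y ∈ K := by
    have hper : F^[n * l] y = y := by
      rw [Function.iterate_mul]
      exact Function.iterate_fixed hfix l
    have hle : l ≤ n * l := Nat.le_mul_of_pos_left l hn1
    refine ⟨F^[n * l - l] y, Set.mem_univ _, ?_⟩
    rw [← Function.iterate_add_apply, Nat.add_sub_cancel' hle, hper]
  exact hyl hyK

/-- let Ω ⊆ NW(g) satisfy g⁻¹(Ω) = Ω.  Then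
NW(F) ∩ p₁⁻¹(Ω) = S ∩ p₁⁻¹(Ω); in particular every point of S ∩ p₁⁻¹(Ω)
is a non-wandering point of F. -/
theorem stmt12 {T N : Type*} [MetricSpace T] [CompactSpace T] [Nonempty T]
    [MetricSpace N] [CompactSpace N] [Nonempty N]
    (g : T → T) (hgc : Continuous g) (hgs : Function.Surjective g)
    (hgcov : IsCoveringMap g)
    (F : T × N → T × N) (hFc : Continuous F) (hFi : Function.Injective F)
    (hfib : ∀ p : T × N, (F p).1 = g p.1)
    (C lam : ℝ) (hC : 0 < C) (hlam0 : 0 < lam) (hlam1 : lam < 1)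
    (hcontr : ∀ (t : T) (n : ℕ),
      Metric.diam (F^[n] '' ({t} ×ˢ (Set.univ : Set N))) ≤ C * lam ^ n)
    (S : Set (T × N)) (hS : S = ⋂ l : ℕ, F^[l] '' Set.univ)
    (Ω : Set T) (hΩNW : Ω ⊆ {x | NonWandering g x}) (hΩinv : g ⁻¹' Ω = Ω) :
    {y : T × N | NonWandering F y} ∩ Prod.fst ⁻¹' Ω = S ∩ Prod.fst ⁻¹' Ω ∧
      ∀ y ∈ S ∩ Prod.fst ⁻¹' Ω, NonWandering F y := by
  -- iterated fiber formula
  have hfib' : ∀ (n : ℕ) (p : T × N), (F^[n] p).1 = g^[n] p.1 := by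
    intro n
    induction n with
    | zero => intro p; simp
    | succ n ih =>
        intro p
        rw [Function.iterate_succ_apply', Function.iterate_succ_apply', hfib, ih]
  -- Ω is invariant under preimages of iterates
  have hΩk : ∀ k : ℕ, g^[k] ⁻¹' Ω = Ω := by
    intro k
    induction k with
    | zero => simp
    | succ k ih => rw [Function.iterate_succ, Set.preimage_comp, ih, hΩinv]
  -- NW(F) ⊆ S
  have hNWS : ∀ y : T × N, NonWandering F y → y ∈ S := by
    intro y hy
    rw [hS, Set.mem_iInter]
    exact fun l => nonWandering_mem_iterate_image F hFc y hy l
  -- S ∩ p₁⁻¹(Ω) ⊆ NW(F)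
  have hSNW : ∀ y ∈ S ∩ Prod.fst ⁻¹' Ω, NonWandering F y := by
    rintro ⟨t, z⟩ ⟨hyS, hyΩ⟩ U hU
    obtain ⟨ε, hε, hball⟩ := Metric.mem_nhds_iff.1 hU
    -- choose k with C * lam ^ k < ε / 2
    obtain ⟨k, hk⟩ : ∃ k : ℕ, C * lam ^ k < ε / 2 := by
      obtain ⟨k, hk⟩ := exists_pow_lt_of_lt_one (show (0:ℝ) < ε / (2 * C) by positivity) hlam1
      refine ⟨k, ?_⟩
      have := (mul_lt_mul_iff_right₀ hC).2 hk
      calc C * lam ^ k < C * (ε / (2 * C)) := this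
        _ = ε / 2 := by field_simp
    have hyk : (t, z) ∈ F^[k] '' Set.univ := by
      rw [hS, Set.mem_iInter] at hyS
      exact hyS k
    obtain ⟨⟨tk, zk⟩, -, hpk⟩ := hyk
    have htkt : g^[k] tk = t := by
      have := hfib' k (tk, zk)
      rw [hpk] at this
      exact this.symm
    have htkΩ : tk ∈ Ω := by
      rw [← hΩk k]
      show g^[k] tk ∈ Ω
      rw [htkt]
      exact hyΩ
    -- uniform continuity of F^[k]
    obtain ⟨δ, hδ, hucont⟩ : ∃ δ > 0, ∀ a b : T × N, dist a b < δ →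
        dist (F^[k] a) (F^[k] b) < ε / 2 := by
      have huc := CompactSpace.uniformContinuous_of_continuous (hFc.iterate k)
      obtain ⟨δ, hδ, h⟩ := Metric.uniformContinuous_iff.1 huc (ε / 2) (by linarith)
      exact ⟨δ, hδ, fun a b hab => h hab⟩
    -- use non-wandering of tk in the base
    have htkNW : NonWandering g tk := hΩNW htkΩ
    obtain ⟨m, hm, q, ⟨s, hs, rfl⟩, hq2⟩ :=
      htkNW (Metric.ball tk δ) (Metric.ball_mem_nhds _ hδ)
    -- the returning point
    have hu : F^[k] (s, zk) ∈ U := by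
      apply hball
      rw [Metric.mem_ball]
      have hd : dist ((s, zk) : T × N) (tk, zk) < δ := by
        rw [Prod.dist_eq]
        simp only [dist_self]
        rw [max_eq_left dist_nonneg]
        exact Metric.mem_ball.1 hs
      have := hucont _ _ hd
      rw [hpk] at this
      linarith
    have hFu : F^[m] (F^[k] (s, zk)) ∈ U := by
      apply hball
      rw [Metric.mem_ball]
      have hco : F^[m] (F^[k] (s, zk)) = F^[k] (F^[m] (s, zk)) := by
        rw [← Function.iterate_add_apply, ← Function.iterate_add_apply, Nat.add_comm]
      set q' := F^[m] (s, zk) with hq'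
      have hq'1 : q'.1 = g^[m] s := hfib' m (s, zk)
      have hd1 : dist (F^[k] q') (F^[k] (tk, q'.2)) < ε / 2 := by
        apply hucont
        rw [Prod.dist_eq]
        simp only [dist_self]
        rw [max_eq_left dist_nonneg]
        rw [hq'1]
        exact Metric.mem_ball.1 hq2
      have hd2 : dist (F^[k] (tk, q'.2)) (F^[k] (tk, zk)) ≤ C * lam ^ k := by
        have hbdd : Bornology.IsBounded (F^[k] '' ({tk} ×ˢ (Set.univ : Set N))) :=
          ((isCompact_singleton.prod isCompact_univ).image (hFc.iterate k)).isBounded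
        have h1 : F^[k] (tk, q'.2) ∈ F^[k] '' ({tk} ×ˢ (Set.univ : Set N)) :=
          ⟨(tk, q'.2), ⟨rfl, Set.mem_univ _⟩, rfl⟩
        have h2 : F^[k] (tk, zk) ∈ F^[k] '' ({tk} ×ˢ (Set.univ : Set N)) :=
          ⟨(tk, zk), ⟨rfl, Set.mem_univ _⟩, rfl⟩
        exact le_trans (Metric.dist_le_diam_of_mem hbdd h1 h2) (hcontr tk k)
      calc dist (F^[m] (F^[k] (s, zk))) (t, z)
          ≤ dist (F^[m] (F^[k] (s, zk))) (F^[k] (tk, q'.2)) +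
            dist (F^[k] (tk, q'.2)) (t, z) := dist_triangle _ _ _
        _ < ε / 2 + ε / 2 := by
            apply add_lt_add_of_lt_of_le
            · rw [hco]; exact hd1
            · rw [← hpk]; exact le_trans hd2 (le_of_lt hk)
        _ = ε := by ring
    exact ⟨m, hm, F^[m] (F^[k] (s, zk)), ⟨F^[k] (s, zk), hu, rfl⟩, hFu⟩
  refine ⟨?_, hSNW⟩
  ext y
  simp only [Set.mem_inter_iff, Set.mem_setOf_eq, Set.mem_preimage]
  constructor
  · rintro ⟨h1, h2⟩
    exact ⟨hNWS y h1, h2⟩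
  · rintro ⟨h1, h2⟩
    exact ⟨hSNW y ⟨h1, h2⟩, h2⟩
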